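/- Let T and Δ be independent exponentially distributed random variables with rates λ_T > 0 and λ_Δ > 0, and let x > 0. If λ_Δ > λ_T and λ_Δ·exp(−x·λ_Δ) < λ_T·exp(−x·λ_T), then P(Δ < x and x < Δ + T) > P(x < T): a strictly positive object fetch delay strictly increases the hit probability of a cache fed by a periodic request stream with period x. -/

import Mathlib

open MeasureTheory ProbabilityTheory Real Set

lemma expMeasure_withDensity (r : ℝ) :
    expMeasure r = volume.withDensity (exponentialPDF r) := rfl

lemma expMeasure_Iic {r : ℝ} (hr : 0 < r) {y : ℝ} (hy : 0 ≤ y) :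
    expMeasure r (Iic y) = ENNReal.ofReal (1 - exp (-(r * y))) := by
  rw [expMeasure_withDensity, withDensity_apply _ measurableSet_Iic,
    lintegral_exponentialPDF_eq_antiDeriv hr, if_pos hy]

lemma expMeasure_Ioi {r : ℝ} (hr : 0 < r) {y : ℝ} (hy : 0 ≤ y) :
    expMeasure r (Ioi y) = ENNReal.ofReal (exp (-(r * y))) := by
  haveI := isProbabilityMeasure_expMeasure hr
  have hc : Ioi y = (Iic y)ᶜ := by simp
  have he : exp (-(r * y)) ≤ 1 := exp_le_one_iff.mpr (by nlinarith)
  rw [hc, measure_compl measurableSet_Iic (measure_ne_top _ _), expMeasure_Iic hr hy,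
    measure_univ]
  rw [show (1 : ENNReal) = ENNReal.ofReal 1 by simp, ← ENNReal.ofReal_sub _ (by linarith)]
  norm_num

/-- Let `T` and `Δ` be independent exponentials with rates `0 < lamT < lamD` and let
`x > 0` be the deterministic inter-request time of a periodic request stream. If
`lamD·exp(-x·lamD) < lamT·exp(-x·lamT)`, then `P(Δ < x < Δ + T) > P(x < T)`: a strictly
positive object fetch delay strictly increases the hit probability. -/
theorem delay_strictly_improves_hit_probability
    {Ω : Type*} [MeasurableSpace Ω] (μ : Measure Ω) [IsProbabilityMeasure μ]
    (T Δ : Ω → ℝ) (lamT lamD : ℝ) (hlamT : 0 < lamT) (hlt : lamT < lamD)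
    (hmT : Measurable T) (hmΔ : Measurable Δ)
    (hT : μ.map T = expMeasure lamT) (hΔ : μ.map Δ = expMeasure lamD)
    (hindep : IndepFun T Δ μ) (x : ℝ) (hx : 0 < x)
    (hineq : lamD * Real.exp (-x * lamD) < lamT * Real.exp (-x * lamT)) :
    (μ {ω | Δ ω < x ∧ x < Δ ω + T ω}).toReal > (μ {ω | x < T ω}).toReal := by
  have hlamD : 0 < lamD := hlamT.trans hlt
  haveI := isProbabilityMeasure_expMeasure hlamT
  haveI := isProbabilityMeasure_expMeasure hlamD
  -- P(x < T)
  have hmiss : μ {ω | x < T ω} = ENNReal.ofReal (exp (-(lamT * x))) := by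
    have : {ω | x < T ω} = T ⁻¹' (Ioi x) := rfl
    rw [this, ← Measure.map_apply hmT measurableSet_Ioi, hT, expMeasure_Ioi hlamT hx.le]
  -- the joint event as a preimage
  set S : Set (ℝ × ℝ) := {p : ℝ × ℝ | p.1 < x ∧ x < p.1 + p.2} with hS
  have hSm : MeasurableSet S := by
    apply MeasurableSet.inter
    · exact measurableSet_lt measurable_fst measurable_const
    · exact measurableSet_lt measurable_const (measurable_fst.add measurable_snd)
  have hmap : μ.map (fun ω ↦ (Δ ω, T ω)) = (expMeasure lamD).prod (expMeasure lamT) := by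
    rw [← hΔ, ← hT]
    exact (indepFun_iff_map_prod_eq_prod_map_map hmΔ.aemeasurable hmT.aemeasurable).mp
      hindep.symm
  have hhit0 : μ {ω | Δ ω < x ∧ x < Δ ω + T ω}
      = ((expMeasure lamD).prod (expMeasure lamT)) S := by
    have : {ω | Δ ω < x ∧ x < Δ ω + T ω} = (fun ω ↦ (Δ ω, T ω)) ⁻¹' S := rfl
    rw [this, ← Measure.map_apply (hmΔ.prodMk hmT) hSm, hmap]
  -- compute the product measure
  have hslice : ∀ d : ℝ, exponentialPDF lamD d * expMeasure lamT (Prod.mk d ⁻¹' S)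
      = (Ico 0 x).indicator
        (fun d ↦ ENNReal.ofReal (lamD * exp (-(lamD * d)) * exp (-(lamT * (x - d))))) d := by
    intro d
    have hpre : Prod.mk d ⁻¹' S = {t : ℝ | d < x ∧ x < d + t} := rfl
    by_cases h0 : 0 ≤ d
    · by_cases hdx : d < x
      · have : Prod.mk d ⁻¹' S = Ioi (x - d) := by
          ext t; simp [hpre, hdx, sub_lt_iff_lt_add']
        rw [this, expMeasure_Ioi hlamT (by linarith), indicator_of_mem (Set.mem_Ico.mpr ⟨h0, hdx⟩),
          exponentialPDF_of_nonneg h0, ← ENNReal.ofReal_mul (by positivity)]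
      · have : Prod.mk d ⁻¹' S = ∅ := by
          ext t; simp [hpre]; intro h; linarith
        rw [this, indicator_of_notMem (fun hm ↦ hdx hm.2)]
        simp
    · rw [exponentialPDF_of_neg (lt_of_not_ge h0),
        indicator_of_notMem (fun hm ↦ h0 hm.1)]
      simp
  have hprod : ((expMeasure lamD).prod (expMeasure lamT)) S
      = ∫⁻ d in Ico 0 x,
          ENNReal.ofReal (lamD * exp (-(lamD * d)) * exp (-(lamT * (x - d)))) := by
    have hpdfm : Measurable (exponentialPDF lamD) :=
      (measurable_exponentialPDFReal lamD).ennreal_ofReal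
    rw [Measure.prod_apply hSm, expMeasure_withDensity lamD,
      lintegral_withDensity_eq_lintegral_mul _ hpdfm
        (measurable_measure_prodMk_left (ν := expMeasure lamT) hSm)]
    simp_rw [Pi.mul_apply]
    rw [show (fun d ↦ exponentialPDF lamD d * expMeasure lamT (Prod.mk d ⁻¹' S))
        = (Ico 0 x).indicator
          (fun d ↦ ENNReal.ofReal (lamD * exp (-(lamD * d)) * exp (-(lamT * (x - d)))))
      from funext hslice]
    rw [lintegral_indicator measurableSet_Ico]
  -- evaluate the lintegral as a real integral
  have hcont : Continuous fun d : ℝ ↦ lamD * exp (-(lamD * d)) * exp (-(lamT * (x - d))) := by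
    fun_prop
  have hInt : IntegrableOn (fun d : ℝ ↦ lamD * exp (-(lamD * d)) * exp (-(lamT * (x - d))))
      (Ico 0 x) := (hcont.integrableOn_Icc (a := 0) (b := x)).mono_set Ico_subset_Icc_self
  have hlint : (∫⁻ d in Ico 0 x,
        ENNReal.ofReal (lamD * exp (-(lamD * d)) * exp (-(lamT * (x - d)))))
      = ENNReal.ofReal
        (∫ d in Ico 0 x, lamD * exp (-(lamD * d)) * exp (-(lamT * (x - d)))) := by
    rw [← ofReal_integral_eq_lintegral_ofReal hInt
      (Filter.Eventually.of_forall fun d ↦ by positivity)]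
  -- compute the real integral
  have hkey : (∫ d in Ico 0 x, lamD * exp (-(lamD * d)) * exp (-(lamT * (x - d))))
      = lamD / (lamD - lamT) * (exp (-(lamT * x)) - exp (-(lamD * x))) := by
    have hc : lamT - lamD ≠ 0 := by intro h; nlinarith
    have h1 : (∫ d in Ico 0 x, lamD * exp (-(lamD * d)) * exp (-(lamT * (x - d))))
        = ∫ d in (0:ℝ)..x, lamD * exp (-(lamT * x)) * exp ((lamT - lamD) * d) := by
      rw [setIntegral_congr_set Ico_ae_eq_Ioc,
        ← intervalIntegral.integral_of_le hx.le]
      apply intervalIntegral.integral_congr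
      intro d _
      dsimp only
      rw [mul_assoc, mul_assoc, ← exp_add, ← exp_add]
      congr 1
      ring_nf
    rw [h1]
    rw [intervalIntegral.integral_const_mul]
    have h2 : (∫ d in (0:ℝ)..x, exp ((lamT - lamD) * d))
        = (lamT - lamD)⁻¹ * (exp ((lamT - lamD) * x) - 1) := by
      rw [intervalIntegral.integral_comp_mul_left (fun y ↦ exp y) hc, integral_exp]
      simp [smul_eq_mul]
    rw [h2]
    have hE : exp (-(lamT * x)) * exp ((lamT - lamD) * x) = exp (-(lamD * x)) := by
      rw [← exp_add]; ring_nf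
    have hd : lamD - lamT ≠ 0 := by intro h; nlinarith
    field_simp
    have hE' : exp (-(lamT * x)) * exp (x * (lamT - lamD)) = exp (-(lamD * x)) := by
      rw [mul_comm x]; exact hE
    linear_combination (lamD - lamT) * hE'
  -- put it together
  have hhit : μ {ω | Δ ω < x ∧ x < Δ ω + T ω}
      = ENNReal.ofReal (lamD / (lamD - lamT) * (exp (-(lamT * x)) - exp (-(lamD * x)))) := by
    rw [hhit0, hprod, hlint, hkey]
  have hd : (0:ℝ) < lamD - lamT := by linarith
  have hgap : 0 < exp (-(lamT * x)) - exp (-(lamD * x)) := by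
    have := exp_lt_exp.mpr (show -(lamD * x) < -(lamT * x) by nlinarith)
    linarith
  rw [hhit, hmiss,
    ENNReal.toReal_ofReal (mul_pos (div_pos hlamD hd) hgap).le,
    ENNReal.toReal_ofReal (exp_pos _).le]
  have h1 : (-x) * lamT = -(lamT * x) := by ring
  have h2 : (-x) * lamD = -(lamD * x) := by ring
  rw [h1, h2] at hineq
  rw [gt_iff_lt, div_mul_eq_mul_div, lt_div_iff₀ hd]
  nlinarith
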